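/- Inert maps of trees are injective: let T = (A, M, N, s, p, t) and T' = (A', M', N', s', p', t') be trees, and let (α : A → A', β : M → M', γ : N → N') be an inert morphism, i.e. s' ∘ β = α ∘ s, p' ∘ β = γ ∘ p, t' ∘ γ = α ∘ t, and the middle square is a pullback in the sense that for every n : N the map β restricts to a bijection from the fibre p⁻¹(n) to the fibre p'⁻¹(γ n). Then α, β and γ are all injective. -/
import Mathlib


/-- A finite rooted (operadic) tree: finite types `A` (edges), `M`, `N` (nodes)
with maps `s : M → A`, `p : M → N`, `t : N → A` such that `t` is injective, `s` is
injective with singleton complement (the root), and the walk-to-the-root function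
`σ` (defined by `σ(root) = root` and `σ(s e) = t (p e)`) reaches the root from
every edge in finitely many steps. -/
structure OperadicTree where
  A : Type
  M : Type
  N : Type
  finA : Finite A
  finM : Finite M
  finN : Finite N
  s : M → A
  p : M → N
  t : N → A
  t_inj : Function.Injective t
  s_inj : Function.Injective s
  root : A
  root_not_mem : root ∉ Set.range s
  mem_range_of_ne_root : ∀ a : A, a ≠ root → a ∈ Set.range s
  σ : A → A
  σ_root : σ root = root
  σ_s : ∀ e : M, σ (s e) = t (p e)
  reaches_root : ∀ a : A, ∃ k : ℕ, σ^[k] a = root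

/-- Inert maps of trees are injective: if `(α, β, γ)` is an inert morphism of
trees (commuting with the structure maps, with the middle square a pullback in the
sense that `β` restricts to a bijection on the fibres of `p`), then `α`, `β` and
`γ` are injective. -/
theorem inert_map_injective (T T' : OperadicTree)
    (α : T.A → T'.A) (β : T.M → T'.M) (γ : T.N → T'.N)
    (hs : T'.s ∘ β = α ∘ T.s)
    (hp : T'.p ∘ β = γ ∘ T.p)
    (ht : T'.t ∘ γ = α ∘ T.t)
    (hpb : ∀ n : T.N, Function.Bijective fun e : {e : T.M // T.p e = n} =>
      (⟨β e.1, (congrFun hp e.1).trans (congrArg γ e.2)⟩ :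
        {e' : T'.M // T'.p e' = γ n})) :
    Function.Injective α ∧ Function.Injective β ∧ Function.Injective γ := by

  classical
  have hs' : ∀ e : T.M, T'.s (β e) = α (T.s e) := fun e => congrFun hs e
  have hp' : ∀ e : T.M, T'.p (β e) = γ (T.p e) := fun e => congrFun hp e
  have ht' : ∀ n : T.N, T'.t (γ n) = α (T.t n) := fun n => congrFun ht n
  -- Conjugation away from the root: σ' (α a) = α (σ a) for a ≠ root.
  have hA : ∀ a : T.A, a ≠ T.root → T'.σ (α a) = α (T.σ a) := by
    intro a ha
    obtain ⟨e, rfl⟩ := T.mem_range_of_ne_root a ha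
    rw [← hs' e, T'.σ_s, T.σ_s, hp' e]
    exact ht' (T.p e)
  -- Iterated conjugation.
  have hB : ∀ k : ℕ, ∀ a : T.A, (∀ j, j < k → T.σ^[j] a ≠ T.root) →
      T'.σ^[k] (α a) = α (T.σ^[k] a) := by
    intro k
    induction k with
    | zero => intro a _; simp
    | succ k ih =>
      intro a ha
      rw [Function.iterate_succ_apply, Function.iterate_succ_apply,
        hA a (by simpa using ha 0 (Nat.succ_pos k))]
      refine ih (T.σ a) ?_
      intro j hj
      have := ha (j + 1) (Nat.succ_lt_succ hj)
      simpa [Function.iterate_succ_apply] using this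
  -- depth function
  have dex : ∀ a : T.A, ∃ k, T.σ^[k] a = T.root := T.reaches_root
  set d : T.A → ℕ := fun a => Nat.find (dex a) with hd
  have dspec : ∀ a, T.σ^[d a] a = T.root := fun a => Nat.find_spec (dex a)
  have dmin : ∀ a, ∀ j, j < d a → T.σ^[j] a ≠ T.root :=
    fun a j hj => Nat.find_min (dex a) hj
  -- root' is fixed by iterates
  have hroot' : ∀ m : ℕ, T'.σ^[m] T'.root = T'.root := by
    intro m
    induction m with
    | zero => rfl
    | succ m ih => rw [Function.iterate_succ_apply, T'.σ_root, ih]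
  -- Root lemma: α c = α root forces c = root.
  have hRoot : ∀ c : T.A, α c = α T.root → c = T.root := by
    intro c hc
    by_contra hcr
    have hx : T'.σ^[d c] (α c) = α c := by
      rw [hB (d c) c (dmin c), dspec c, ← hc]
    have hd1 : 1 ≤ d c := by
      rcases Nat.eq_zero_or_pos (d c) with h | h
      · exact absurd (by simpa [h] using dspec c) hcr
      · exact h
    have hxne : α c ≠ T'.root := by
      obtain ⟨e, rfl⟩ := T.mem_range_of_ne_root c hcr
      rw [← hs' e]
      exact fun h => T'.root_not_mem ⟨β e, h⟩
    have hcyc : ∀ k : ℕ, T'.σ^[k * d c] (α c) = α c := by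
      intro k
      induction k with
      | zero => simp
      | succ k ih => rw [Nat.succ_mul, Function.iterate_add_apply, hx]; exact ih
    obtain ⟨K, hK⟩ := T'.reaches_root (α c)
    have hge : K ≤ K * d c := Nat.le_mul_of_pos_right K hd1
    obtain ⟨m, hm⟩ := Nat.exists_eq_add_of_le hge
    have : T'.σ^[K * d c] (α c) = T'.root := by
      rw [hm, Nat.add_comm, Function.iterate_add_apply, hK, hroot' m]
    exact hxne (by rw [← hcyc K, this])
  -- α a = α b forces equal depths.
  have key : ∀ a b : T.A, α a = α b → d a ≤ d b := by
    intro a b hab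
    by_contra h
    push_neg at h
    have h1 : T'.σ^[d b] (α b) = α T.root := by rw [hB _ b (dmin b), dspec b]
    have h2 : T'.σ^[d b] (α a) = α (T.σ^[d b] a) :=
      hB _ a (fun j hj => dmin a j (hj.trans h))
    have h3 : α (T.σ^[d b] a) = α T.root := by rw [← h2, hab, h1]
    exact dmin a (d b) h (hRoot _ h3)
  -- Main: α is injective, by strong induction on depth.
  have hα : Function.Injective α := by
    have main : ∀ n : ℕ, ∀ a b : T.A, d a = n → α a = α b → a = b := by
      intro n
      induction n using Nat.strong_induction_on with
      | _ n ih =>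
        intro a b hda hab
        have hdb : d b = n := le_antisymm (hda ▸ key b a hab.symm) (hda ▸ key a b hab)
        rcases Nat.eq_zero_or_pos n with hn | hn
        · have ha : a = T.root := by simpa [hda, hn] using dspec a
          have hb : b = T.root := by simpa [hdb, hn] using dspec b
          rw [ha, hb]
        · have har : a ≠ T.root := by
            intro h
            have : d a = 0 := Nat.le_antisymm (Nat.find_le (by simp [h])) (Nat.zero_le _)
            omega
          have hbr : b ≠ T.root := by
            intro h
            have : d b = 0 := Nat.le_antisymm (Nat.find_le (by simp [h])) (Nat.zero_le _)
            omega
          obtain ⟨e, rfl⟩ := T.mem_range_of_ne_root a har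
          obtain ⟨f, rfl⟩ := T.mem_range_of_ne_root b hbr
          have hβ : β e = β f := by
            apply T'.s_inj
            rw [hs' e, hs' f]; exact hab
          have hσab : α (T.σ (T.s e)) = α (T.σ (T.s f)) := by
            rw [← hA _ har, ← hA _ hbr, hab]
          have hdlt : d (T.σ (T.s e)) < n := by
            have h1 : T.σ^[n - 1] (T.σ (T.s e)) = T.root := by
              have := dspec (T.s e)
              rw [hda] at this
              rw [← Function.iterate_succ_apply, Nat.succ_eq_add_one,
                Nat.sub_add_cancel hn]
              exact this
            have h2 : d (T.σ (T.s e)) ≤ n - 1 := Nat.find_le h1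
            omega
          have hσ : T.σ (T.s e) = T.σ (T.s f) := ih _ hdlt _ _ rfl hσab
          have hpe : T.p e = T.p f := by
            apply T.t_inj
            rw [← T.σ_s, ← T.σ_s, hσ]
          have := (hpb (T.p e)).injective
            (a₁ := ⟨e, rfl⟩) (a₂ := ⟨f, hpe.symm⟩) (Subtype.ext hβ)
          have hef : e = f := congrArg Subtype.val this
          rw [hef]
    intro a b hab
    exact main (d a) a b rfl hab
  refine ⟨hα, ?_, ?_⟩
  · intro e f hef
    apply T.s_inj
    apply hα
    rw [← hs' e, ← hs' f, hef]
  · intro n m hnm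
    apply T.t_inj
    apply hα
    rw [← ht' n, ← ht' m, hnm]
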